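/- If (x; x_1,...,x_n) ∈ C, then there is a finite sequence of transformations, each of which is either the Cremona transform Cr or a permutation of the last n coordinates, whose composition carries (x; x_1,...,x_n) to a reduced vector. -/

import Mathlib

/-- The product `(x; x_i)·(y; y_i) = x*y - ∑ i, x_i * y_i` on `ℝ^{1+(n+3)}`. -/
def dotp {n : ℕ} (x y : ℝ × (Fin (n + 3) → ℝ)) : ℝ :=
  x.1 * y.1 - ∑ i, x.2 i * y.2 i

/-- The vector `-K = (3; 1, 1, …, 1)`. -/
def negK {n : ℕ} : ℝ × (Fin (n + 3) → ℝ) := (3, fun _ => 1)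

/-- The Cremona transform. -/
def Cr {n : ℕ} (d : ℝ × (Fin (n + 3) → ℝ)) : ℝ × (Fin (n + 3) → ℝ) :=
  (2 * d.1 - d.2 0 - d.2 1 - d.2 2,
    fun i =>
      if i = 0 then d.1 - d.2 1 - d.2 2
      else if i = 1 then d.1 - d.2 0 - d.2 2
      else if i = 2 then d.1 - d.2 0 - d.2 1
      else d.2 i)

/-- A vector is positive if all its entries are nonnegative. -/
def PositiveVec {n : ℕ} (d : ℝ × (Fin (n + 3) → ℝ)) : Prop :=
  0 ≤ d.1 ∧ ∀ i, 0 ≤ d.2 i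

/-- A vector is ordered if `d_i ≥ d_{i+1}` whenever both are nonzero, and nonzero
entries precede zero entries. -/
def OrderedVec {n : ℕ} (d : ℝ × (Fin (n + 3) → ℝ)) : Prop :=
  (∀ (i : ℕ) (h1 : i < n + 3) (h2 : i + 1 < n + 3),
      d.2 ⟨i, h1⟩ ≠ 0 → d.2 ⟨i + 1, h2⟩ ≠ 0 → d.2 ⟨i + 1, h2⟩ ≤ d.2 ⟨i, h1⟩) ∧
  (∀ i j : Fin (n + 3), d.2 i ≠ 0 → d.2 j = 0 → i < j)

/-- A vector is reduced if it is positive, ordered, and `d ≥ d_1 + d_2 + d_3`. -/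
def ReducedVec {n : ℕ} (d : ℝ × (Fin (n + 3) → ℝ)) : Prop :=
  PositiveVec d ∧ OrderedVec d ∧ d.2 0 + d.2 1 + d.2 2 ≤ d.1

/-- A vector has integer entries. -/
def IntVec {n : ℕ} (d : ℝ × (Fin (n + 3) → ℝ)) : Prop :=
  (∃ z : ℤ, d.1 = z) ∧ ∀ i, ∃ z : ℤ, d.2 i = z

/-- The set `E` of integer vectors with `(d;d_i)·(d;d_i) ≥ -1` and `-K·(d;d_i) = 1`. -/
def ESet {n : ℕ} : Set (ℝ × (Fin (n + 3) → ℝ)) :=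
  {d | IntVec d ∧ -1 ≤ dotp d d ∧ dotp negK d = 1}

/-- The set `C` of integer vectors with `(x;x_i)·(x;x_i) ≥ 0` that pair nonnegatively
with every element of `E`. -/
def CSet {n : ℕ} : Set (ℝ × (Fin (n + 3) → ℝ)) :=
  {x | IntVec x ∧ 0 ≤ dotp x x ∧ ∀ d ∈ ESet, 0 ≤ dotp x d}

namespace CRedAux
variable {n : ℕ}

lemma fne01 : (0 : Fin (n+3)) ≠ 1 := by simp [Fin.ext_iff]
lemma fne02 : (0 : Fin (n+3)) ≠ 2 := by simp [Fin.ext_iff, Nat.mod_eq_of_lt (show 2 < n + 3 by omega)]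
lemma fne12 : (1 : Fin (n+3)) ≠ 2 := by simp [Fin.ext_iff, Nat.mod_eq_of_lt (show 2 < n + 3 by omega)]
lemma fne10 : (1 : Fin (n+3)) ≠ 0 := fne01.symm
lemma fne20 : (2 : Fin (n+3)) ≠ 0 := fne02.symm
lemma fne21 : (2 : Fin (n+3)) ≠ 1 := fne12.symm

lemma Cr_fst (x : ℝ × (Fin (n+3) → ℝ)) : (Cr x).1 = 2*x.1 - x.2 0 - x.2 1 - x.2 2 := rfl
lemma Cr_snd0 (x : ℝ × (Fin (n+3) → ℝ)) : (Cr x).2 0 = x.1 - x.2 1 - x.2 2 := by simp [Cr]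
lemma Cr_snd1 (x : ℝ × (Fin (n+3) → ℝ)) : (Cr x).2 1 = x.1 - x.2 0 - x.2 2 := by
  simp [Cr, fne10]
lemma Cr_snd2 (x : ℝ × (Fin (n+3) → ℝ)) : (Cr x).2 2 = x.1 - x.2 0 - x.2 1 := by
  simp [Cr, fne20, fne21]
lemma Cr_snd_ne (x : ℝ × (Fin (n+3) → ℝ)) {i : Fin (n+3)} (h0 : i ≠ 0) (h1 : i ≠ 1)
    (h2 : i ≠ 2) : (Cr x).2 i = x.2 i := by simp [Cr, h0, h1, h2]

lemma sum_split (F G : Fin (n+3) → ℝ) (h : ∀ i, i ≠ 0 → i ≠ 1 → i ≠ 2 → F i = G i) :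
    ∑ i, F i = (F 0 + F 1 + F 2) - (G 0 + G 1 + G 2) + ∑ i, G i := by
  have key : ∑ i ∈ ({0,1,2} : Finset (Fin (n+3))), (F i - G i) = ∑ i, (F i - G i) :=
    Finset.sum_subset (Finset.subset_univ _) (fun i _ hi => by
      simp only [Finset.mem_insert, Finset.mem_singleton] at hi
      push_neg at hi
      rw [h i hi.1 hi.2.1 hi.2.2]; ring)
  have h2 : ∑ i ∈ ({0,1,2} : Finset (Fin (n+3))), (F i - G i)
      = (F 0 - G 0) + (F 1 - G 1) + (F 2 - G 2) := by
    rw [Finset.sum_insert (by simp [fne01, fne02]),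
      Finset.sum_insert (by simp [fne12]), Finset.sum_singleton]
    ring
  rw [h2, Finset.sum_sub_distrib] at key
  linarith

lemma sum_012 (F : Fin (n+3) → ℝ) (h : ∀ i, i ≠ 0 → i ≠ 1 → i ≠ 2 → F i = 0) :
    ∑ i, F i = F 0 + F 1 + F 2 := by
  have := sum_split F (fun _ => 0) h
  simpa using this

lemma dotp_Cr_Cr (x y : ℝ × (Fin (n+3) → ℝ)) : dotp (Cr x) (Cr y) = dotp x y := by
  unfold dotp
  rw [sum_split (fun i => (Cr x).2 i * (Cr y).2 i) (fun i => x.2 i * y.2 i)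
      (fun i h0 h1 h2 => by
        show (Cr x).2 i * (Cr y).2 i = x.2 i * y.2 i
        rw [Cr_snd_ne x h0 h1 h2, Cr_snd_ne y h0 h1 h2])]
  simp only [Cr_fst, Cr_snd0, Cr_snd1, Cr_snd2]
  ring

lemma Cr_Cr (x : ℝ × (Fin (n+3) → ℝ)) : Cr (Cr x) = x := by
  have h1 : (Cr (Cr x)).1 = x.1 := by
    rw [Cr_fst, Cr_fst, Cr_snd0, Cr_snd1, Cr_snd2]; ring
  have h2 : (Cr (Cr x)).2 = x.2 := by
    funext i
    by_cases hi0 : i = 0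
    · subst hi0; rw [Cr_snd0, Cr_fst, Cr_snd1, Cr_snd2]; ring
    · by_cases hi1 : i = 1
      · subst hi1; rw [Cr_snd1, Cr_fst, Cr_snd0, Cr_snd2]; ring
      · by_cases hi2 : i = 2
        · subst hi2; rw [Cr_snd2, Cr_fst, Cr_snd0, Cr_snd1]; ring
        · rw [Cr_snd_ne _ hi0 hi1 hi2, Cr_snd_ne _ hi0 hi1 hi2]
  exact Prod.ext h1 h2

end CRedAux
namespace CRedAux
variable {n : ℕ}

lemma Cr_negK : Cr (negK : ℝ × (Fin (n+3) → ℝ)) = negK := by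
  have h1 : (Cr (negK : ℝ × (Fin (n+3) → ℝ))).1 = (3:ℝ) := by
    rw [Cr_fst]; norm_num [negK]
  have h2 : (Cr (negK : ℝ × (Fin (n+3) → ℝ))).2 = fun _ => (1:ℝ) := by
    funext i
    by_cases hi0 : i = 0
    · subst hi0; rw [Cr_snd0]; norm_num [negK]
    · by_cases hi1 : i = 1
      · subst hi1; rw [Cr_snd1]; norm_num [negK]
      · by_cases hi2 : i = 2
        · subst hi2; rw [Cr_snd2]; norm_num [negK]
        · rw [Cr_snd_ne _ hi0 hi1 hi2]; rfl
  exact Prod.ext h1 h2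

lemma dotp_Cr (x y : ℝ × (Fin (n+3) → ℝ)) : dotp (Cr x) y = dotp x (Cr y) := by
  conv_lhs => rw [← Cr_Cr y]
  exact dotp_Cr_Cr x (Cr y)

lemma dotp_negK_Cr (x : ℝ × (Fin (n+3) → ℝ)) : dotp negK (Cr x) = dotp negK x := by
  conv_lhs => rw [← Cr_negK]
  exact dotp_Cr_Cr negK x

lemma IntVec_Cr {x : ℝ × (Fin (n+3) → ℝ)} (h : IntVec x) : IntVec (Cr x) := by
  obtain ⟨⟨z, hz⟩, hs⟩ := h
  obtain ⟨z0, h0⟩ := hs 0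
  obtain ⟨z1, h1⟩ := hs 1
  obtain ⟨z2, h2⟩ := hs 2
  refine ⟨⟨2*z - z0 - z1 - z2, by rw [Cr_fst, hz, h0, h1, h2]; push_cast; ring⟩, fun i => ?_⟩
  by_cases hi0 : i = 0
  · subst hi0; exact ⟨z - z1 - z2, by rw [Cr_snd0, hz, h1, h2]; push_cast; ring⟩
  · by_cases hi1 : i = 1
    · subst hi1; exact ⟨z - z0 - z2, by rw [Cr_snd1, hz, h0, h2]; push_cast; ring⟩
    · by_cases hi2 : i = 2
      · subst hi2; exact ⟨z - z0 - z1, by rw [Cr_snd2, hz, h0, h1]; push_cast; ring⟩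
      · obtain ⟨w, hw⟩ := hs i
        exact ⟨w, by rw [Cr_snd_ne _ hi0 hi1 hi2, hw]⟩

lemma dotp_perm (σ : Equiv.Perm (Fin (n+3))) (x y : ℝ × (Fin (n+3) → ℝ)) :
    dotp (x.1, x.2 ∘ σ) (y.1, y.2 ∘ σ) = dotp x y := by
  unfold dotp
  congr 1
  exact Equiv.sum_comp σ (fun j => x.2 j * y.2 j)

lemma perm_negK (σ : Equiv.Perm (Fin (n+3))) :
    ((negK : ℝ × (Fin (n+3) → ℝ)).1, negK.2 ∘ σ) = negK := rfl

lemma dotp_negK_perm (σ : Equiv.Perm (Fin (n+3))) (x : ℝ × (Fin (n+3) → ℝ)) :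
    dotp negK (x.1, x.2 ∘ σ) = dotp negK x := by
  conv_lhs => rw [← perm_negK σ]
  exact dotp_perm σ negK x

lemma IntVec_perm (σ : Equiv.Perm (Fin (n+3))) {x : ℝ × (Fin (n+3) → ℝ)} (h : IntVec x) :
    IntVec (x.1, x.2 ∘ σ) := ⟨h.1, fun i => h.2 (σ i)⟩

lemma ESet_Cr {d : ℝ × (Fin (n+3) → ℝ)} (hd : d ∈ ESet) : Cr d ∈ ESet :=
  ⟨IntVec_Cr hd.1, by rw [dotp_Cr_Cr]; exact hd.2.1, by rw [dotp_negK_Cr]; exact hd.2.2⟩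

lemma ESet_perm (σ : Equiv.Perm (Fin (n+3))) {d : ℝ × (Fin (n+3) → ℝ)} (hd : d ∈ ESet) :
    (d.1, d.2 ∘ σ) ∈ ESet :=
  ⟨IntVec_perm σ hd.1, by rw [dotp_perm]; exact hd.2.1, by rw [dotp_negK_perm]; exact hd.2.2⟩

lemma CSet_Cr {x : ℝ × (Fin (n+3) → ℝ)} (hx : x ∈ CSet) : Cr x ∈ CSet := by
  refine ⟨IntVec_Cr hx.1, by rw [dotp_Cr_Cr]; exact hx.2.1, fun d hd => ?_⟩
  rw [dotp_Cr]
  exact hx.2.2 (Cr d) (ESet_Cr hd)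

lemma CSet_perm (σ : Equiv.Perm (Fin (n+3))) {x : ℝ × (Fin (n+3) → ℝ)} (hx : x ∈ CSet) :
    (x.1, x.2 ∘ σ) ∈ CSet := by
  refine ⟨IntVec_perm σ hx.1, by rw [dotp_perm]; exact hx.2.1, fun d hd => ?_⟩
  have hcomp : ((d.1, d.2 ∘ ⇑σ⁻¹).1, (d.1, d.2 ∘ ⇑σ⁻¹).2 ∘ ⇑σ) = d := by
    refine Prod.ext rfl (funext fun i => ?_)
    simp
  have := hx.2.2 (d.1, d.2 ∘ ⇑σ⁻¹) (ESet_perm σ⁻¹ hd)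
  calc (0:ℝ) ≤ dotp x (d.1, d.2 ∘ ⇑σ⁻¹) := this
    _ = dotp (x.1, x.2 ∘ ⇑σ) d := by
        conv_rhs => rw [← hcomp]
        exact (dotp_perm σ x (d.1, d.2 ∘ ⇑σ⁻¹)).symm

lemma eNeg_mem (i : Fin (n+3)) :
    ((0 : ℝ), fun j => if j = i then (-1:ℝ) else 0) ∈ (ESet (n := n)) := by
  refine ⟨⟨⟨0, by norm_num⟩, fun j => ?_⟩, ?_, ?_⟩
  · by_cases h : j = i
    · exact ⟨-1, by simp [h]⟩
    · exact ⟨0, by simp [h]⟩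
  · unfold dotp
    simp [ite_mul, Finset.sum_ite_eq']
  · unfold dotp negK
    simp [Finset.sum_ite_eq']

lemma CSet_snd_nonneg {x : ℝ × (Fin (n+3) → ℝ)} (hx : x ∈ CSet) (i : Fin (n+3)) :
    0 ≤ x.2 i := by
  have h := hx.2.2 _ (eNeg_mem i)
  unfold dotp at h
  simp [mul_ite, Finset.sum_ite_eq'] at h
  linarith

def e01 : ℝ × (Fin (n+3) → ℝ) :=
  (1, fun j => if j = 0 then 1 else if j = 1 then 1 else 0)

lemma e01_snd0 : (e01 : ℝ × (Fin (n+3) → ℝ)).2 0 = 1 := by simp [e01]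
lemma e01_snd1 : (e01 : ℝ × (Fin (n+3) → ℝ)).2 1 = 1 := by simp [e01, fne10]
lemma e01_snd_ne {i : Fin (n+3)} (h0 : i ≠ 0) (h1 : i ≠ 1) :
    (e01 : ℝ × (Fin (n+3) → ℝ)).2 i = 0 := by simp [e01, h0, h1]

lemma e01_mem : (e01 : ℝ × (Fin (n+3) → ℝ)) ∈ ESet := by
  refine ⟨⟨⟨1, by norm_num [e01]⟩, fun j => ?_⟩, ?_, ?_⟩
  · by_cases h0 : j = 0
    · exact ⟨1, by rw [h0, e01_snd0]; norm_num⟩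
    · by_cases h1 : j = 1
      · exact ⟨1, by rw [h1, e01_snd1]; norm_num⟩
      · exact ⟨0, by rw [e01_snd_ne h0 h1]; norm_num⟩
  · unfold dotp
    rw [sum_012 _ (fun i h0 h1 _ => by rw [e01_snd_ne h0 h1]; ring)]
    rw [e01_snd0, e01_snd1, e01_snd_ne fne20 fne21]
    show (-1:ℝ) ≤ (e01 (n:=n)).1 * (e01 (n:=n)).1 - (1*1 + 1*1 + 0*0)
    norm_num [e01]
  · unfold dotp
    rw [sum_012 _ (fun i h0 h1 _ => by
      show (negK (n:=n)).2 i * (e01 (n:=n)).2 i = 0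
      rw [e01_snd_ne h0 h1]; ring)]
    show (negK (n:=n)).1 * (e01 (n:=n)).1 -
      ((negK (n:=n)).2 0 * (e01 (n:=n)).2 0 + (negK (n:=n)).2 1 * (e01 (n:=n)).2 1 +
        (negK (n:=n)).2 2 * (e01 (n:=n)).2 2) = 1
    rw [e01_snd0, e01_snd1, e01_snd_ne fne20 fne21]
    norm_num [negK, e01]

lemma CSet_fst_nonneg {x : ℝ × (Fin (n+3) → ℝ)} (hx : x ∈ CSet) : 0 ≤ x.1 := by
  have h := hx.2.2 _ e01_mem
  unfold dotp at h
  rw [sum_012 _ (fun i h0 h1 _ => by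
    show x.2 i * (e01 (n:=n)).2 i = 0
    rw [e01_snd_ne h0 h1]; ring)] at h
  rw [e01_snd0, e01_snd1, e01_snd_ne fne20 fne21] at h
  have h0 := CSet_snd_nonneg hx 0
  have h1 := CSet_snd_nonneg hx 1
  have : (e01 (n:=n)).1 = 1 := rfl
  rw [this] at h
  nlinarith

lemma exists_sorted (x : ℝ × (Fin (n+3) → ℝ)) :
    ∃ σ : Equiv.Perm (Fin (n+3)), Antitone (x.2 ∘ σ) := by
  refine ⟨Tuple.sort (fun i => -x.2 i), fun i j hij => ?_⟩
  have h := Tuple.monotone_sort (fun i => -x.2 i) hij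
  simp only [Function.comp_apply] at h ⊢
  linarith

lemma ordered_of (y : ℝ × (Fin (n+3) → ℝ)) (ha : Antitone y.2)
    (hn : ∀ i, 0 ≤ y.2 i) : OrderedVec y := by
  constructor
  · intro i h1 h2 _ _
    exact ha (by simp [Fin.le_def])
  · intro i j hi hj
    by_contra hlt
    push_neg at hlt
    exact hi (le_antisymm (hj ▸ ha hlt) (hn i))

end CRedAux
namespace CRedAux
variable {n : ℕ}

lemma main_aux : ∀ k : ℕ, ∀ x : ℝ × (Fin (n+3) → ℝ), x ∈ CSet → x.1 = (k : ℝ) →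
    ∃ L : List (ℝ × (Fin (n + 3) → ℝ) → ℝ × (Fin (n + 3) → ℝ)),
      (∀ f ∈ L, f = Cr ∨ ∃ σ : Equiv.Perm (Fin (n + 3)), f = fun v => (v.1, v.2 ∘ σ)) ∧
      ReducedVec (L.foldl (fun v f => f v) x) := by
  intro k
  induction k using Nat.strong_induction_on with
  | _ k IH =>
    intro x hx hk
    obtain ⟨σ, hσ⟩ := exists_sorted x
    set y : ℝ × (Fin (n+3) → ℝ) := (x.1, x.2 ∘ σ) with hy
    have hyC : y ∈ CSet := CSet_perm σ hx
    have hpos : ∀ i, 0 ≤ y.2 i := CSet_snd_nonneg hyC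
    have hord : OrderedVec y := ordered_of y hσ hpos
    by_cases hred : y.2 0 + y.2 1 + y.2 2 ≤ y.1
    · refine ⟨[fun v => (v.1, v.2 ∘ σ)], ?_, ?_⟩
      · intro f hf
        simp only [List.mem_singleton] at hf
        subst hf
        exact Or.inr ⟨σ, rfl⟩
      · exact ⟨⟨CSet_fst_nonneg hyC, hpos⟩, hord, hred⟩
    · push_neg at hred
      have hzC : Cr y ∈ CSet := CSet_Cr hyC
      have hz1 : (Cr y).1 = 2*y.1 - (y.2 0 + y.2 1 + y.2 2) := by rw [Cr_fst]; ring
      have h0 : 0 ≤ (Cr y).1 := CSet_fst_nonneg hzC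
      obtain ⟨w, hw⟩ := hzC.1.1
      have hwnn : 0 ≤ w := by
        rw [hw] at h0
        exact_mod_cast h0
      have hy1 : y.1 = (k : ℝ) := hk
      have hltR : (Cr y).1 < (k : ℝ) := by rw [hz1, hy1]; linarith
      have hwk : w < (k : ℤ) := by
        rw [hw] at hltR
        exact_mod_cast hltR
      have hlt : w.toNat < k := by omega
      have hcast : (Cr y).1 = (w.toNat : ℝ) := by
        rw [hw]
        norm_cast
        rw [Int.toNat_of_nonneg hwnn]
      obtain ⟨L', hL'1, hL'2⟩ := IH w.toNat hlt (Cr y) hzC hcast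
      refine ⟨(fun v => (v.1, v.2 ∘ σ)) :: Cr :: L', ?_, ?_⟩
      · intro f hf
        simp only [List.mem_cons] at hf
        rcases hf with hf | hf | hf
        · exact Or.inr ⟨σ, hf⟩
        · exact Or.inl hf
        · exact hL'1 f hf
      · simp only [List.foldl_cons]
        exact hL'2

end CRedAux

theorem C_reducible {n : ℕ} (x : ℝ × (Fin (n + 3) → ℝ)) (hx : x ∈ CSet) :
    ∃ L : List (ℝ × (Fin (n + 3) → ℝ) → ℝ × (Fin (n + 3) → ℝ)),
      (∀ f ∈ L, f = Cr ∨ ∃ σ : Equiv.Perm (Fin (n + 3)), f = fun v => (v.1, v.2 ∘ σ)) ∧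
      ReducedVec (L.foldl (fun v f => f v) x) := by
  obtain ⟨z, hz⟩ := hx.1.1
  have h0 : 0 ≤ x.1 := CRedAux.CSet_fst_nonneg hx
  have hznn : 0 ≤ z := by rw [hz] at h0; exact_mod_cast h0
  have hcast : x.1 = (z.toNat : ℝ) := by
    rw [hz]
    norm_cast
    rw [Int.toNat_of_nonneg hznn]
  exact CRedAux.main_aux z.toNat x hx hcast
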